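/- For every r0 > 0 there exists a constant C >= 0, depending only on r0, such that for all r in (0, r0] and all u in [-1/2, 1/2]: | M(u) - r (1 + 2 cosh(r)) csch(r) * u - (1/4) r^2 ( 4 cosh(r) - 1 ) csch^2(r/2) * u^2 | <= C * |u|^3, where M(u) = ( sinh( r(1+u)/2 ) / sinh(r/2) )^2 * ( sinh( r(1+u) ) / sinh(r) ) - 1. -/

import Mathlib

open Real

private lemma nonneg_on_Ici (f f' : ℝ → ℝ) (hf : ∀ x, HasDerivAt f (f' x) x)
    (h0 : f 0 = 0) (hd : ∀ x, 0 ≤ x → 0 ≤ f' x) : ∀ x, 0 ≤ x → 0 ≤ f x := by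
  intro x hx
  have hdiff : ∀ y, DifferentiableAt ℝ f y := fun y => (hf y).differentiableAt
  have hmono : MonotoneOn f (Set.Ici (0:ℝ)) :=
    monotoneOn_of_deriv_nonneg (convex_Ici 0)
      (fun y _ => (hdiff y).continuousAt.continuousWithinAt)
      (fun y _ => (hdiff y).differentiableWithinAt)
      (fun y hy => by
        rw [(hf y).deriv]
        rw [interior_Ici] at hy
        exact hd y hy.le)
  calc (0:ℝ) = f 0 := h0.symm
    _ ≤ f x := hmono Set.self_mem_Ici hx hx

private lemma exp_sub_one_le (x : ℝ) : Real.exp x - 1 ≤ x * Real.exp x := by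
  have h := Real.add_one_le_exp (-x)
  have hp := Real.exp_pos x
  have key : (-x + 1) * Real.exp x ≤ Real.exp (-x) * Real.exp x :=
    mul_le_mul_of_nonneg_right h hp.le
  rw [← Real.exp_add, neg_add_cancel, Real.exp_zero] at key
  nlinarith

private lemma E2 : ∀ x : ℝ, 0 ≤ x → 0 ≤ Real.exp x - 1 - x - x^2/2 := by
  apply nonneg_on_Ici _ (fun x => Real.exp x - 1 - x)
  · intro x
    have h := (((Real.hasDerivAt_exp x).sub_const 1).sub (hasDerivAt_id x)).sub
      ((hasDerivAt_pow 2 x).div_const 2)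
    refine h.congr_deriv ?_
    first
    | (simp; ring)
    | simp
  · simp
  · intro x _
    have := Real.add_one_le_exp x
    linarith

private lemma Q2 : ∀ x : ℝ, 0 ≤ x → 0 ≤ x^2/2 * Real.exp x - (Real.exp x - 1 - x) := by
  apply nonneg_on_Ici _ (fun x => (x * Real.exp x + x^2/2 * Real.exp x) - (Real.exp x - 1))
  · intro x
    have h := (((hasDerivAt_pow 2 x).div_const 2).mul (Real.hasDerivAt_exp x)).sub
      (((Real.hasDerivAt_exp x).sub_const 1).sub (hasDerivAt_id x))
    refine h.congr_deriv ?_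
    first
    | (simp; ring)
    | simp
  · simp
  · intro x hx
    have h1 := exp_sub_one_le x
    have h2 := Real.exp_pos x
    nlinarith

private lemma Q3 : ∀ x : ℝ, 0 ≤ x → 0 ≤ x^3/6 * Real.exp x - (Real.exp x - 1 - x - x^2/2) := by
  apply nonneg_on_Ici _
    (fun x => (x^2/2 * Real.exp x + x^3/6 * Real.exp x) - (Real.exp x - 1 - x))
  · intro x
    have h := (((hasDerivAt_pow 3 x).div_const 6).mul (Real.hasDerivAt_exp x)).sub
      ((((Real.hasDerivAt_exp x).sub_const 1).sub (hasDerivAt_id x)).sub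
        ((hasDerivAt_pow 2 x).div_const 2))
    refine h.congr_deriv ?_
    first
    | (simp; ring)
    | simp
  · simp
  · intro x hx
    have h1 := Q2 x hx
    have h2 : (0:ℝ) ≤ x^3/6 * Real.exp x := by positivity
    linarith

private lemma N1 : ∀ x : ℝ, 0 ≤ x → 0 ≤ (1 - x + x^2/2) - Real.exp (-x) := by
  apply nonneg_on_Ici _ (fun x => (-1 + x) - (-Real.exp (-x)))
  · intro x
    have hexp : HasDerivAt (fun x : ℝ => Real.exp (-x)) (-Real.exp (-x)) x := by
      have h := (Real.hasDerivAt_exp (-x)).comp x (hasDerivAt_neg x)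
      exact h.congr_deriv (by ring)
    have h := (((hasDerivAt_const x (1:ℝ)).sub (hasDerivAt_id x)).add
      ((hasDerivAt_pow 2 x).div_const 2)).sub hexp
    refine h.congr_deriv ?_
    first
    | (simp; ring)
    | simp
  · simp
  · intro x hx
    have := Real.add_one_le_exp (-x)
    linarith

private lemma N2 : ∀ x : ℝ, 0 ≤ x → 0 ≤ Real.exp (-x) - (1 - x + x^2/2 - x^3/6) := by
  apply nonneg_on_Ici _ (fun x => -Real.exp (-x) - (-1 + x - x^2/2))
  · intro x
    have hexp : HasDerivAt (fun x : ℝ => Real.exp (-x)) (-Real.exp (-x)) x := by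
      have h := (Real.hasDerivAt_exp (-x)).comp x (hasDerivAt_neg x)
      exact h.congr_deriv (by ring)
    have h := hexp.sub ((((hasDerivAt_const x (1:ℝ)).sub (hasDerivAt_id x)).add
      ((hasDerivAt_pow 2 x).div_const 2)).sub ((hasDerivAt_pow 3 x).div_const 6))
    refine h.congr_deriv ?_
    first
    | (simp; ring)
    | simp
  · simp
  · intro x hx
    have := N1 x hx
    linarith

private lemma expE (y : ℝ) : |Real.exp y - 1 - y - y^2/2| ≤ |y|^3/6 * Real.exp |y| := by
  rcases le_total 0 y with hy | hy
  · rw [abs_of_nonneg hy, abs_le]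
    have h1 := E2 y hy
    have h2 := Q3 y hy
    have h3 : 0 ≤ y^3/6 * Real.exp y := by positivity
    constructor <;> linarith
  · rw [abs_of_nonpos hy, abs_le]
    set z := -y with hz
    have hz0 : 0 ≤ z := by simp [hz]; linarith
    have h1 := N1 z hz0
    have h2 := N2 z hz0
    have h3 : 1 ≤ Real.exp z := Real.one_le_exp hz0
    have hy2 : y = -z := by simp [hz]
    rw [hy2]
    have hz36 : 0 ≤ z^3/6 := by positivity
    constructor <;> nlinarith

private lemma expE' (y : ℝ) : |Real.exp (-y) - 1 + y - y^2/2| ≤ |y|^3/6 * Real.exp |y| := by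
  have h := expE (-y)
  rw [show Real.exp (-y) - 1 - (-y) - (-y)^2/2 = Real.exp (-y) - 1 + y - y^2/2 by ring,
    abs_neg] at h
  exact h

private lemma sinh_taylor (y : ℝ) : |Real.sinh y - y| ≤ |y|^3/6 * Real.exp |y| := by
  have h1 := expE y
  have h2 := expE' y
  rw [Real.sinh_eq]
  rw [abs_le] at h1 h2 ⊢
  constructor <;> [linarith; linarith]

private lemma cosh_taylor (y : ℝ) : |Real.cosh y - 1 - y^2/2| ≤ |y|^3/6 * Real.exp |y| := by
  have h1 := expE y
  have h2 := expE' y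
  rw [Real.cosh_eq]
  rw [abs_le] at h1 h2 ⊢
  constructor <;> [linarith; linarith]

set_option maxHeartbeats 2000000 in
/-- Second-order Taylor expansion with uniformly controlled remainder of the ratio
`M(u) + 1` of Bergman perimeter densities. -/
theorem M_taylor_expansion (r0 : ℝ) (hr0 : 0 < r0) :
    ∃ C : ℝ, 0 ≤ C ∧
      ∀ r : ℝ, 0 < r → r ≤ r0 →
      ∀ u : ℝ, -(1/2) ≤ u → u ≤ 1/2 →
        |((Real.sinh (r * (1 + u) / 2) / Real.sinh (r / 2)) ^ 2
              * (Real.sinh (r * (1 + u)) / Real.sinh r) - 1)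
            - r * (1 + 2 * Real.cosh r) * (1 / Real.sinh r) * u
            - (1 / 4) * r ^ 2 * (4 * Real.cosh r - 1) * (1 / Real.sinh (r / 2) ^ 2) * u ^ 2|
          ≤ C * |u| ^ 3 := by
  refine ⟨24 * Real.exp r0 ^ 4, by positivity, ?_⟩
  intro r hr hrr0 u hu1 hu2
  set E := Real.exp r0 with hE_def
  have hE1 : 1 ≤ E := Real.one_le_exp hr0.le
  have hr0E : r0 < E := by have := Real.add_one_le_exp r0; linarith
  -- exponential substitution
  set a := Real.exp (r/2) with ha_def
  set b := Real.exp (r*u/2) with hb_def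
  have ha0 : (0:ℝ) < a := Real.exp_pos _
  have hb0 : (0:ℝ) < b := Real.exp_pos _
  have ha1 : 1 < a := Real.one_lt_exp_iff.2 (by linarith)
  have e_r : Real.exp r = a^2 := by
    rw [ha_def, sq, ← Real.exp_add]; congr 1; ring
  have e_ab : Real.exp (r*(1+u)/2) = a*b := by
    rw [ha_def, hb_def, ← Real.exp_add]; congr 1; ring
  have e_ab2 : Real.exp (r*(1+u)) = a^2*b^2 := by
    rw [ha_def, hb_def, show r*(1+u) = r/2 + r/2 + (r*u/2 + r*u/2) by ring,
      Real.exp_add, Real.exp_add, Real.exp_add]; ring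
  have e_b2 : Real.exp (r*u) = b^2 := by
    rw [hb_def, sq, ← Real.exp_add]; congr 1; ring
  have e_b4 : Real.exp (2*(r*u)) = b^4 := by
    rw [hb_def, show 2*(r*u) = r*u/2 + r*u/2 + (r*u/2 + r*u/2) by ring,
      Real.exp_add, Real.exp_add]
    ring
  have s_half : Real.sinh (r/2) = (a - a⁻¹)/2 := by rw [Real.sinh_eq, Real.exp_neg, ha_def]
  have c_half : Real.cosh (r/2) = (a + a⁻¹)/2 := by rw [Real.cosh_eq, Real.exp_neg, ha_def]
  have s_r : Real.sinh r = (a^2 - (a^2)⁻¹)/2 := by rw [Real.sinh_eq, Real.exp_neg, e_r]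
  have c_r : Real.cosh r = (a^2 + (a^2)⁻¹)/2 := by rw [Real.cosh_eq, Real.exp_neg, e_r]
  have s_ab : Real.sinh (r*(1+u)/2) = (a*b - (a*b)⁻¹)/2 := by
    rw [Real.sinh_eq, Real.exp_neg, e_ab]
  have s_ab2 : Real.sinh (r*(1+u)) = (a^2*b^2 - (a^2*b^2)⁻¹)/2 := by
    rw [Real.sinh_eq, Real.exp_neg, e_ab2]
  have s_y : Real.sinh (r*u) = (b^2 - (b^2)⁻¹)/2 := by rw [Real.sinh_eq, Real.exp_neg, e_b2]
  have c_y : Real.cosh (r*u) = (b^2 + (b^2)⁻¹)/2 := by rw [Real.cosh_eq, Real.exp_neg, e_b2]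
  have s_2y : Real.sinh (2*(r*u)) = (b^4 - (b^4)⁻¹)/2 := by
    rw [Real.sinh_eq, Real.exp_neg, e_b4]
  have c_2y : Real.cosh (2*(r*u)) = (b^4 + (b^4)⁻¹)/2 := by
    rw [Real.cosh_eq, Real.exp_neg, e_b4]
  -- positivity of sinh/cosh
  have hsh2 : 0 < Real.sinh (r/2) := Real.sinh_pos_iff.2 (by linarith)
  have hshr : 0 < Real.sinh r := Real.sinh_pos_iff.2 hr
  set A := Real.cosh (r/2) / Real.sinh (r/2) with hA_def
  set B := Real.cosh r / Real.sinh r with hB_def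
  -- the key algebraic identity
  have hid :
      ((Real.sinh (r * (1 + u) / 2) / Real.sinh (r / 2)) ^ 2
              * (Real.sinh (r * (1 + u)) / Real.sinh r) - 1)
            - r * (1 + 2 * Real.cosh r) * (1 / Real.sinh r) * u
            - (1 / 4) * r ^ 2 * (4 * Real.cosh r - 1) * (1 / Real.sinh (r / 2) ^ 2) * u ^ 2
      = (1 - A^2)/2 * (Real.cosh (r*u) - 1 - (r*u)^2/2)
      + B * ((1 - A^2)/2) * (Real.sinh (r*u) - r*u)
      + ((1 + A^2)/4 + A * B/2) * (Real.cosh (2*(r*u)) - 1 - 2*(r*u)^2)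
      + (B * ((1 + A^2)/4) + A/2) * (Real.sinh (2*(r*u)) - 2*(r*u)) := by
    rw [hA_def, hB_def, s_ab, s_half, s_ab2, s_r, c_r, c_half, s_y, c_y, s_2y, c_2y]
    have han : a ≠ 0 := ha0.ne'
    have hbn : b ≠ 0 := hb0.ne'
    have h2 : a^2 - 1 ≠ 0 := by nlinarith
    have h4 : a^4 - 1 ≠ 0 := by
      nlinarith [pow_pos ha0 4, one_lt_pow₀ ha1 (by norm_num : (4:ℕ) ≠ 0)]
    rw [show a - a⁻¹ = (a^2-1)/a by field_simp,
        show a + a⁻¹ = (a^2+1)/a by field_simp,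
        show a^2 - (a^2)⁻¹ = (a^4-1)/a^2 by field_simp,
        show a^2 + (a^2)⁻¹ = (a^4+1)/a^2 by field_simp]
    field_simp
    ring
  rw [hid]
  clear hid s_half c_half s_r c_r s_ab s_ab2 s_y c_y s_2y c_2y e_r e_ab e_ab2 e_b2 e_b4
  clear_value a b
  clear ha_def hb_def ha0 hb0 ha1 a b
  -- bounds on A and B
  set P := 2*E/r with hP_def
  have hP0 : 0 < P := by positivity
  have h1P : 1 ≤ P := by
    rw [hP_def, le_div_iff₀ hr]; nlinarith
  have habs_u : |u| ≤ 1/2 := abs_le.2 ⟨by linarith, hu2⟩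
  have hA_pos : 0 < A := div_pos (Real.cosh_pos _) hsh2
  have hB_pos : 0 < B := div_pos (Real.cosh_pos _) hshr
  have hcosh_le : ∀ x : ℝ, 0 ≤ x → x ≤ r0 → Real.cosh x ≤ E := by
    intro x hx hxr0
    rw [Real.cosh_eq]
    have h1 : Real.exp (-x) ≤ Real.exp x := Real.exp_le_exp.2 (by linarith)
    have h2 : Real.exp x ≤ E := Real.exp_le_exp.2 hxr0
    linarith
  have hA_le : A ≤ P := by
    rw [hA_def, hP_def]
    have hs_ge : r/2 ≤ Real.sinh (r/2) := (Real.self_lt_sinh_iff.2 (by linarith)).le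
    have hc_le : Real.cosh (r/2) ≤ E := hcosh_le (r/2) (by linarith) (by linarith)
    calc Real.cosh (r/2) / Real.sinh (r/2) ≤ E / (r/2) :=
          div_le_div₀ (by positivity) hc_le (by linarith) hs_ge
      _ = 2*E/r := by field_simp
  have hB_le : B ≤ P := by
    rw [hB_def, hP_def]
    have hs_ge : r ≤ Real.sinh r := (Real.self_lt_sinh_iff.2 hr).le
    have hc_le : Real.cosh r ≤ E := hcosh_le r hr.le hrr0
    calc Real.cosh r / Real.sinh r ≤ E / r := div_le_div₀ (by positivity) hc_le hr hs_ge
      _ ≤ 2*E/r := by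
          rw [div_le_div_iff₀ hr hr]; nlinarith [Real.exp_pos r0]
  -- coefficient bounds
  have hA2 : A^2 ≤ P^2 := by nlinarith
  have hB2 : B^2 ≤ P^2 := by nlinarith
  have hP2 : P^2 ≤ P^3 := by nlinarith
  have hP13 : 1 ≤ P^3 := by nlinarith
  have hPP : P ≤ P^3 := by nlinarith
  have hAB : A*B ≤ P^2 := by nlinarith
  have hc1 : |(1 - A^2)/2| ≤ P^3 := by
    rw [abs_le]; constructor <;> nlinarith
  have hc2 : |B * ((1 - A^2)/2)| ≤ P^3 := by
    rw [abs_mul, abs_of_pos hB_pos]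
    have h1 : |(1 - A^2)/2| ≤ P^2 := by rw [abs_le]; constructor <;> nlinarith
    calc B * |(1 - A^2)/2| ≤ P * P^2 :=
          mul_le_mul hB_le h1 (abs_nonneg _) hP0.le
      _ = P^3 := by ring
  have hc3 : |(1 + A^2)/4 + A * B/2| ≤ P^3 := by
    rw [abs_of_pos (by positivity)]
    nlinarith
  have hc4 : |B * ((1 + A^2)/4) + A/2| ≤ P^3 := by
    rw [abs_of_pos (by positivity)]
    nlinarith [mul_le_mul hB_le (by nlinarith : (1 + A^2)/4 ≤ P^2) (by positivity) hP0.le]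
  -- Taylor factor bounds
  have h_ru : |r*u| = r*|u| := by rw [abs_mul, abs_of_pos hr]
  have h_ru_le : |r*u| ≤ r0 := by
    rw [h_ru]; nlinarith [abs_nonneg u]
  have h_2ru_le : |2*(r*u)| ≤ r0 := by
    rw [abs_mul, abs_two, abs_mul, abs_of_pos hr]; nlinarith [abs_nonneg u]
  have hexp_ru : Real.exp |r*u| ≤ E := Real.exp_le_exp.2 h_ru_le
  have hexp_2ru : Real.exp |2*(r*u)| ≤ E := Real.exp_le_exp.2 h_2ru_le
  have hf1 : |Real.cosh (r*u) - 1 - (r*u)^2/2| ≤ r^3*|u|^3/6*E := by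
    calc |Real.cosh (r*u) - 1 - (r*u)^2/2| ≤ |r*u|^3/6 * Real.exp |r*u| := cosh_taylor _
      _ ≤ r^3*|u|^3/6*E := by
          rw [show |r*u|^3 = r^3*|u|^3 by rw [h_ru, mul_pow]]
          exact mul_le_mul_of_nonneg_left hexp_ru (by positivity)
  have hf2 : |Real.sinh (r*u) - r*u| ≤ r^3*|u|^3/6*E := by
    calc |Real.sinh (r*u) - r*u| ≤ |r*u|^3/6 * Real.exp |r*u| := sinh_taylor _
      _ ≤ r^3*|u|^3/6*E := by
          rw [show |r*u|^3 = r^3*|u|^3 by rw [h_ru, mul_pow]]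
          exact mul_le_mul_of_nonneg_left hexp_ru (by positivity)
  have hf3 : |Real.cosh (2*(r*u)) - 1 - 2*(r*u)^2| ≤ 8*(r^3*|u|^3)/6*E := by
    have h := cosh_taylor (2*(r*u))
    rw [show (2*(r*u))^2/2 = 2*(r*u)^2 by ring] at h
    calc |Real.cosh (2*(r*u)) - 1 - 2*(r*u)^2| ≤ |2*(r*u)|^3/6 * Real.exp |2*(r*u)| := h
      _ ≤ 8*(r^3*|u|^3)/6*E := by
          rw [show |2*(r*u)|^3 = 8*(r^3*|u|^3) by rw [abs_mul, abs_two, h_ru]; ring]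
          exact mul_le_mul_of_nonneg_left hexp_2ru (by positivity)
  have hf4 : |Real.sinh (2*(r*u)) - 2*(r*u)| ≤ 8*(r^3*|u|^3)/6*E := by
    have h := sinh_taylor (2*(r*u))
    calc |Real.sinh (2*(r*u)) - 2*(r*u)| ≤ |2*(r*u)|^3/6 * Real.exp |2*(r*u)| := h
      _ ≤ 8*(r^3*|u|^3)/6*E := by
          rw [show |2*(r*u)|^3 = 8*(r^3*|u|^3) by rw [abs_mul, abs_two, h_ru]; ring]
          exact mul_le_mul_of_nonneg_left hexp_2ru (by positivity)
  -- combine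
  have hP3 : (0:ℝ) ≤ P^3 := by positivity
  have t1 : |(1 - A^2)/2 * (Real.cosh (r*u) - 1 - (r*u)^2/2)| ≤ P^3 * (r^3*|u|^3/6*E) := by
    rw [abs_mul]; exact mul_le_mul hc1 hf1 (abs_nonneg _) hP3
  have t2 : |B * ((1 - A^2)/2) * (Real.sinh (r*u) - r*u)| ≤ P^3 * (r^3*|u|^3/6*E) := by
    rw [abs_mul]; exact mul_le_mul hc2 hf2 (abs_nonneg _) hP3
  have t3 : |((1 + A^2)/4 + A * B/2) * (Real.cosh (2*(r*u)) - 1 - 2*(r*u)^2)|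
      ≤ P^3 * (8*(r^3*|u|^3)/6*E) := by
    rw [abs_mul]; exact mul_le_mul hc3 hf3 (abs_nonneg _) hP3
  have t4 : |(B * ((1 + A^2)/4) + A/2) * (Real.sinh (2*(r*u)) - 2*(r*u))|
      ≤ P^3 * (8*(r^3*|u|^3)/6*E) := by
    rw [abs_mul]; exact mul_le_mul hc4 hf4 (abs_nonneg _) hP3
  have hsum := (abs_add_le _ _).trans (add_le_add ((abs_add_le _ _).trans
    (add_le_add ((abs_add_le _ _).trans (add_le_add t1 t2)) t3)) t4)
  refine hsum.trans ?_
  have hfin : P^3 * (r^3*|u|^3/6*E) + P^3 * (r^3*|u|^3/6*E)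
      + P^3 * (8*(r^3*|u|^3)/6*E) + P^3 * (8*(r^3*|u|^3)/6*E) = 24 * E^4 * |u|^3 := by
    rw [hP_def]
    field_simp
    ring
  rw [hfin]
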